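/- There exists an instance with 6 voters, 30 unit-size candidates, budget b = 15, and monotone utility functions, such that for every constant α ≥ 1 there is a choice of utility parameters for which no feasible committee lies in the α-core: for every committee E of size at most 15, there exist two voters and a set T of 5 candidates with total size 5 ≤ (2/6)·15 such that u_i(T) > α · u_i(E ∪ {q}) for both voters i and every additament q. -/

import Mathlib

open Finset

/-- The six gadgets of five candidates each. -/
def gad (k : Fin 6) : Finset (Fin 30) := univ.filter (fun c => c.val / 5 = k.val)

/-- Second-favorite gadget map (two 3-cycles). -/
def sv : Fin 6 → Fin 6 := ![1, 2, 0, 4, 5, 3]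

lemma gad_card : ∀ k : Fin 6, (gad k).card = 5 := by decide

lemma sv_ne : ∀ k : Fin 6, sv k ≠ k := by decide

lemma gad_not_sub : ∀ k : Fin 6, ¬ gad k ⊆ gad (sv k) := by decide

lemma notsub (E : Finset (Fin 30)) (j : Fin 6)
    (hle : (E.filter fun c => c.val / 5 = j.val).card ≤ 3) (q : Fin 30) :
    ¬ gad j ⊆ insert q E := by
  intro hsub
  have hss : (gad j).erase q ⊆ E.filter (fun c => c.val / 5 = j.val) := by
    intro x hx
    obtain ⟨hxq, hxg⟩ := Finset.mem_erase.mp hx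
    have hxE := hsub hxg
    rcases Finset.mem_insert.mp hxE with h | h
    · exact absurd h hxq
    · refine Finset.mem_filter.mpr ⟨h, ?_⟩
      simpa [gad] using hxg
  have h1 := Finset.card_le_card hss
  have h2 : (gad j).card - 1 ≤ ((gad j).erase q).card := Finset.pred_card_le_card_erase
  rw [gad_card j] at h2
  omega

/-- Lower bound for general monotone utilities: with 6 voters, 30 unit-size
candidates and budget 15, for every `α ≥ 1` there are monotone utilities such
that every feasible committee `E` (with `|E| ≤ 15`) is blocked: two voters can
deviate to a committee `T` of 5 candidates (total size `5 ≤ (2/6)·15`) with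
`u_i(T) > α · u_i(E ∪ {q})` for both voters `i` and every additament `q`. -/
theorem general_monotone_core_lower_bound :
    ∀ α : ℝ, 1 ≤ α →
      ∃ u : Fin 6 → Finset (Fin 30) → ℝ,
        (∀ i, ∀ S T : Finset (Fin 30), S ⊆ T → u i S ≤ u i T) ∧
        ∀ E : Finset (Fin 30), E.card ≤ 15 →
          ∃ i₁ i₂ : Fin 6, i₁ ≠ i₂ ∧
            ∃ T : Finset (Fin 30), T.card = 5 ∧
              ∀ q : Fin 30,
                u i₁ T > α * u i₁ (insert q E) ∧
                u i₂ T > α * u i₂ (insert q E) := by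
  intro α hα
  refine ⟨fun i E => (α + 1) * (if gad i ⊆ E then (1:ℝ) else 0) +
      (if gad (sv i) ⊆ E then (1:ℝ) else 0), ?_, ?_⟩
  · -- monotonicity
    intro i S T hST
    dsimp only
    have ind : ∀ G : Finset (Fin 30),
        (if G ⊆ S then (1:ℝ) else 0) ≤ (if G ⊆ T then (1:ℝ) else 0) := by
      intro G
      split_ifs with h1 h2
      · exact le_rfl
      · exact absurd (h1.trans hST) h2
      · norm_num
      · exact le_rfl
    have h1 := ind (gad i)
    have h2 := ind (gad (sv i))
    have hpos : (0:ℝ) ≤ α + 1 := by linarith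
    nlinarith [h1, h2]
  · intro E hE
    -- fiberwise count
    have hsum : (E.filter fun c => c.val / 5 = 0).card +
        (E.filter fun c => c.val / 5 = 1).card +
        (E.filter fun c => c.val / 5 = 2).card +
        (E.filter fun c => c.val / 5 = 3).card +
        (E.filter fun c => c.val / 5 = 4).card +
        (E.filter fun c => c.val / 5 = 5).card ≤ 15 := by
      have hfib := Finset.card_eq_sum_card_fiberwise
        (f := fun c : Fin 30 => c.val / 5) (s := E) (t := Finset.range 6)
        (fun a _ => Finset.mem_range.mpr (by have := a.isLt; show a.val / 5 < 6; omega))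
      simp [Finset.sum_range_succ, -Nat.div_eq_zero_iff] at hfib
      omega
    have key : ∃ k : Fin 6, (E.filter fun c => c.val / 5 = (sv k).val).card ≤ 3 ∧
        (E.filter fun c => c.val / 5 = k.val).card ≤ 3 := by
      by_contra h
      have h' : ∀ k : Fin 6, ¬((E.filter fun c => c.val / 5 = (sv k).val).card ≤ 3 ∧
          (E.filter fun c => c.val / 5 = k.val).card ≤ 3) := fun k hc => h ⟨k, hc⟩
      have h0 := h' 0; have h1 := h' 1; have h2 := h' 2
      have h3 := h' 3; have h4 := h' 4; have h5 := h' 5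
      rw [not_and_or, not_le, not_le] at h0 h1 h2 h3 h4 h5
      have e0 : (sv (0:Fin 6)).val = 1 := rfl
      have e1 : (sv (1:Fin 6)).val = 2 := rfl
      have e2 : (sv (2:Fin 6)).val = 0 := rfl
      have e3 : (sv (3:Fin 6)).val = 4 := rfl
      have e4 : (sv (4:Fin 6)).val = 5 := rfl
      have e5 : (sv (5:Fin 6)).val = 3 := rfl
      rw [e0] at h0; rw [e1] at h1; rw [e2] at h2
      rw [e3] at h3; rw [e4] at h4; rw [e5] at h5
      have v0 : ((0:Fin 6)).val = 0 := rfl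
      have v1 : ((1:Fin 6)).val = 1 := rfl
      have v2 : ((2:Fin 6)).val = 2 := rfl
      have v3 : ((3:Fin 6)).val = 3 := rfl
      have v4 : ((4:Fin 6)).val = 4 := rfl
      have v5 : ((5:Fin 6)).val = 5 := rfl
      rw [v0] at h0; rw [v1] at h1; rw [v2] at h2
      rw [v3] at h3; rw [v4] at h4; rw [v5] at h5
      omega
    obtain ⟨k, hk1, hk2⟩ := key
    refine ⟨sv k, k, sv_ne k, gad (sv k), gad_card _, ?_⟩
    intro q
    dsimp only
    have hn1 : ¬ gad (sv k) ⊆ insert q E := notsub E (sv k) hk1 q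
    have hn2 : ¬ gad k ⊆ insert q E := notsub E k hk2 q
    constructor
    · rw [if_pos (Finset.Subset.refl _), if_neg hn1]
      split_ifs <;> nlinarith
    · rw [if_neg (gad_not_sub k), if_pos (Finset.Subset.refl _), if_neg hn2, if_neg hn1]
      nlinarith
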